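/- Let (aᵢⱼ) be a symmetric matrix with aᵢⱼ > 0 and maximal eigenvalue λ*. Then for c ∈ D and v ∈ ℝⁿ, ∑ᵢⱼ aᵢⱼvᵢvⱼ ≤ (λ*/minⱼ bⱼ) ∑ᵢ vᵢ²/cᵢ. -/
import Mathlib


/-- bound on the attraction quadratic form in terms of the
maximal eigenvalue `λ*` of the symmetric matrix `(aᵢⱼ)` (characterized by the
Rayleigh quotient bound) and `minⱼ bⱼ`. -/
theorem stmt8 (n : ℕ) (hn : 0 < n) (b c : Fin n → ℝ) (a : Fin n → Fin n → ℝ)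
    (hb : ∀ i, 0 < b i) (ha : ∀ i j, a i j = a j i) (hapos : ∀ i j, 0 < a i j)
    (lam : ℝ)
    (hlam : ∀ w : Fin n → ℝ, ∑ i, ∑ j, a i j * w i * w j ≤ lam * ∑ i, (w i) ^ 2)
    (hc : ∀ i, 0 < c i) (hbc : ∑ j, b j * c j < 1)
    (v : Fin n → ℝ) :
    ∑ i, ∑ j, a i j * v i * v j ≤ (lam / ⨅ j, b j) * ∑ i, (v i) ^ 2 / c i := by
  have hne : Nonempty (Fin n) := ⟨⟨0, hn⟩⟩
  obtain ⟨j0, hj0⟩ := Finite.exists_min b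
  have hinf : (⨅ j, b j) = b j0 :=
    le_antisymm (ciInf_le (Finite.bddBelow_range b) j0) (le_ciInf hj0)
  set m := b j0 with hm
  have hm0 : 0 < m := hb j0
  -- lam > 0
  have huniv : (Finset.univ : Finset (Fin n)).Nonempty := Finset.univ_nonempty
  have hsumpos : 0 < ∑ i : Fin n, ∑ j : Fin n, a i j := by
    apply Finset.sum_pos (fun i _ => Finset.sum_pos (fun j _ => hapos i j) huniv) huniv
  have hlampos : 0 < lam := by
    have h1 := hlam (fun _ => 1)
    simp only [mul_one, one_pow, Finset.sum_const, Finset.card_univ, Fintype.card_fin,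
      nsmul_eq_mul, smul_eq_mul] at h1
    have hn' : (0:ℝ) < (n:ℝ) := by exact_mod_cast hn
    by_contra hneg
    push_neg at hneg
    nlinarith [mul_nonneg hn'.le (neg_nonneg.mpr hneg)]
  set cbar := ∑ i, c i with hcbar
  have hci_le : ∀ i, c i ≤ cbar := fun i =>
    Finset.single_le_sum (fun j _ => (hc j).le) (Finset.mem_univ i)
  have hcbar0 : 0 < cbar := Finset.sum_pos (fun i _ => hc i) huniv
  have hmcbar : m * cbar < 1 := by
    have : ∑ j, m * c j ≤ ∑ j, b j * c j :=
      Finset.sum_le_sum fun j _ => mul_le_mul_of_nonneg_right (hj0 j) (hc j).le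
    rw [← Finset.mul_sum] at this
    linarith
  set w : Fin n → ℝ := fun i => |v i| / Real.sqrt (c i) with hw
  have hwnn : ∀ i, 0 ≤ w i := fun i =>
    div_nonneg (abs_nonneg _) (Real.sqrt_nonneg _)
  have hsq : ∀ i, 0 < Real.sqrt (c i) := fun i => Real.sqrt_pos.mpr (hc i)
  have hwv : ∀ i, Real.sqrt (c i) * w i = |v i| := fun i => by
    rw [hw, mul_comm]
    exact div_mul_cancel₀ _ (hsq i).ne'
  have hwsq : ∀ i, (w i) ^ 2 = (v i) ^ 2 / c i := fun i => by
    rw [hw]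
    rw [div_pow, sq_abs, Real.sq_sqrt (hc i).le]
  -- key per-term inequality
  have hterm : ∀ i j, a i j * v i * v j ≤ cbar * (a i j * w i * w j) := by
    intro i j
    have h1 : v i * v j ≤ |v i| * |v j| := by
      calc v i * v j ≤ |v i * v j| := le_abs_self _
        _ = |v i| * |v j| := abs_mul _ _
    have h2 : Real.sqrt (c i) * Real.sqrt (c j) ≤ cbar := by
      calc Real.sqrt (c i) * Real.sqrt (c j) ≤ Real.sqrt cbar * Real.sqrt cbar := by
            apply mul_le_mul (Real.sqrt_le_sqrt (hci_le i)) (Real.sqrt_le_sqrt (hci_le j))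
              (Real.sqrt_nonneg _) (Real.sqrt_nonneg _)
        _ = cbar := Real.mul_self_sqrt hcbar0.le
    have hvi := hwv i
    have hvj := hwv j
    have hai := (hapos i j).le
    calc a i j * v i * v j = a i j * (v i * v j) := by ring
      _ ≤ a i j * (|v i| * |v j|) := mul_le_mul_of_nonneg_left h1 hai
      _ = (Real.sqrt (c i) * Real.sqrt (c j)) * (a i j * w i * w j) := by
          rw [← hvi, ← hvj]; ring
      _ ≤ cbar * (a i j * w i * w j) :=
          mul_le_mul_of_nonneg_right h2
            (mul_nonneg (mul_nonneg hai (hwnn i)) (hwnn j))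
  calc ∑ i, ∑ j, a i j * v i * v j
      ≤ ∑ i, ∑ j, cbar * (a i j * w i * w j) :=
        Finset.sum_le_sum fun i _ => Finset.sum_le_sum fun j _ => hterm i j
    _ = cbar * ∑ i, ∑ j, a i j * w i * w j := by
        simp [Finset.mul_sum]
    _ ≤ cbar * (lam * ∑ i, (w i) ^ 2) := by
        exact mul_le_mul_of_nonneg_left (hlam w) hcbar0.le
    _ = (cbar * lam) * ∑ i, (v i) ^ 2 / c i := by
        rw [Finset.sum_congr rfl fun i _ => hwsq i]; ring
    _ ≤ (lam / m) * ∑ i, (v i) ^ 2 / c i := by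
        apply mul_le_mul_of_nonneg_right _
          (Finset.sum_nonneg fun i _ => div_nonneg (sq_nonneg _) (hc i).le)
        have h4 : cbar ≤ m⁻¹ := by
          rw [← one_div, le_div_iff₀ hm0]; linarith
        calc cbar * lam = lam * cbar := by ring
          _ ≤ lam * m⁻¹ := mul_le_mul_of_nonneg_left h4 hlampos.le
          _ = lam / m := by rw [div_eq_mul_inv]
    _ = (lam / ⨅ j, b j) * ∑ i, (v i) ^ 2 / c i := by rw [hinf]
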